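/- Let u₀, u₁, u₂ ∈ ℝ² satisfy u₀ + u₁ + u₂ = 0, uᵢᵀuⱼ ≤ 0 for all i ≠ j, |u₀| = 1, |u₁| ≥ 1, and suppose u₀, u₁ are linearly independent. Then there exist nonnegative real numbers z₀, z₁, z₂ such that z₀·u₀u₀ᵀ + z₁·u₁u₁ᵀ + z₂·u₂u₂ᵀ = I, where I is the 2×2 identity matrix. -/

import Mathlib

open scoped RealInnerProductSpace

theorem obtuse_superbasis_identity_decomposition
    (u₀ u₁ u₂ : EuclideanSpace ℝ (Fin 2))
    (hsum : u₀ + u₁ + u₂ = 0)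
    (h01 : ⟪u₀, u₁⟫ ≤ 0) (h02 : ⟪u₀, u₂⟫ ≤ 0) (h12 : ⟪u₁, u₂⟫ ≤ 0)
    (hu₀ : ‖u₀‖ = 1) (hu₁ : 1 ≤ ‖u₁‖)
    (hind : LinearIndependent ℝ ![u₀, u₁]) :
    ∃ z₀ z₁ z₂ : ℝ, 0 ≤ z₀ ∧ 0 ≤ z₁ ∧ 0 ≤ z₂ ∧
      z₀ • Matrix.vecMulVec (u₀ : Fin 2 → ℝ) u₀ +
      z₁ • Matrix.vecMulVec (u₁ : Fin 2 → ℝ) u₁ +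
      z₂ • Matrix.vecMulVec (u₂ : Fin 2 → ℝ) u₂ = (1 : Matrix (Fin 2) (Fin 2) ℝ) := by
  set a := u₀ 0 with ha
  set b := u₀ 1 with hb
  set c := u₁ 0 with hc
  set d := u₁ 1 with hd
  have h20 : u₂ 0 = -a - c := by
    have := congrFun (congrArg WithLp.ofLp hsum) 0
    have h' : u₀ 0 + u₁ 0 + u₂ 0 = 0 := this
    rw [← ha, ← hc] at h'; linarith
  have h21 : u₂ 1 = -b - d := by
    have := congrFun (congrArg WithLp.ofLp hsum) 1
    have h' : u₀ 1 + u₁ 1 + u₂ 1 = 0 := this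
    rw [← hb, ← hd] at h'; linarith
  -- determinant nonzero
  have hdet : a * d - b * c ≠ 0 := by
    intro h
    rw [LinearIndependent.pair_iff] at hind
    have h1 : d • u₀ + (-b) • u₁ = 0 := by
      ext i
      fin_cases i <;>
        simp only [Fin.mk_zero, Fin.mk_one, PiLp.add_apply, PiLp.smul_apply, smul_eq_mul,
          PiLp.zero_apply, ← ha, ← hb, ← hc, ← hd] <;> linarith [h]
    have h2 : c • u₀ + (-a) • u₁ = 0 := by
      ext i
      fin_cases i <;>
        simp only [Fin.mk_zero, Fin.mk_one, PiLp.add_apply, PiLp.smul_apply, smul_eq_mul,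
          PiLp.zero_apply, ← ha, ← hb, ← hc, ← hd] <;> linarith [h]
    obtain ⟨hda, hdb⟩ := hind d (-b) h1
    obtain ⟨hca, hcb⟩ := hind c (-a) h2
    have hu0 : u₀ = 0 := by
      ext i
      fin_cases i <;>
        simp only [Fin.mk_zero, Fin.mk_one, PiLp.zero_apply, ← ha, ← hb] <;> linarith
    have := hind 1 0 (by simp [hu0])
    exact one_ne_zero this.1
  have hdetsq : (0:ℝ) < (a * d - b * c) ^ 2 := by positivity
  have hi12 : ⟪u₁, u₂⟫ = c * (-a - c) + d * (-b - d) := by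
    simp only [PiLp.inner_apply, Fin.sum_univ_two, RCLike.inner_apply, starRingEnd_apply,
      star_trivial, ← hc, ← hd, h20, h21]
    ring
  have hi02 : ⟪u₀, u₂⟫ = a * (-a - c) + b * (-b - d) := by
    simp only [PiLp.inner_apply, Fin.sum_univ_two, RCLike.inner_apply, starRingEnd_apply,
      star_trivial, ← ha, ← hb, h20, h21]
    ring
  have hi01 : ⟪u₀, u₁⟫ = a * c + b * d := by
    simp only [PiLp.inner_apply, Fin.sum_univ_two, RCLike.inner_apply, starRingEnd_apply,
      star_trivial, ← ha, ← hb, ← hc, ← hd]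
    ring
  refine ⟨-⟪u₁, u₂⟫ / (a * d - b * c) ^ 2, -⟪u₀, u₂⟫ / (a * d - b * c) ^ 2,
    -⟪u₀, u₁⟫ / (a * d - b * c) ^ 2,
    div_nonneg (by linarith) hdetsq.le,
    div_nonneg (by linarith) hdetsq.le,
    div_nonneg (by linarith) hdetsq.le, ?_⟩
  ext i j
  fin_cases i <;> fin_cases j <;>
    · simp only [Fin.mk_zero, Fin.mk_one, Matrix.add_apply, Matrix.smul_apply,
        Matrix.vecMulVec_apply, Matrix.one_apply, smul_eq_mul, hi01, hi02, hi12, h20, h21,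
        ← ha, ← hb, ← hc, ← hd]
      norm_num
      rw [div_mul_eq_mul_div, div_mul_eq_mul_div, div_mul_eq_mul_div, ← add_div, ← add_div,
        div_eq_iff hdetsq.ne']
      ring
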